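/- (Lifting the full-rank assumption, Appendix C.) Let h be an m×n ROCN matrix (m ≤ n), let A_1,…,A_m and B_1,…,B_n be Hermitian operators on finite-dimensional complex Hilbert spaces H_A and H_B with A_i² = 1 and B_j² = 1, and let ψ ∈ H_A ⊗ H_B be a unit vector satisfying, for every j ∈ {1,…,n}, ((Σ_{i=1}^m h_{ij} A_i) ⊗ B_j) ψ = ψ. Let R_A be the orthogonal projection onto the support of ρ_A = Tr_B |ψ⟩⟨ψ| and R_B the orthogonal projection onto the support of ρ_B = Tr_A |ψ⟩⟨ψ|. Then every A_i commutes with R_A and every B_j commutes with R_B; in particular, the observables are block-diagonal with respect to the decomposition of each local space into the support of the reduced state and its orthogonal complement, and the restrictions of A_i and B_j to these supports still square to the identity. -/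
import Mathlib


open Matrix Kronecker Finset

/-- An `m × n` real matrix `h` (with `m ≤ n`) is ROCN (row-orthogonal, column-normalized)
if all its rows are nonzero, its rows are pairwise orthogonal, and every column has
unit Euclidean norm. -/
def IsROCN {m n : ℕ} (h : Matrix (Fin m) (Fin n) ℝ) : Prop :=
  m ≤ n ∧
  (∀ i, ∃ j, h i j ≠ 0) ∧
  (∀ i k, i ≠ k → ∑ j, h i j * h k j = 0) ∧
  (∀ j, ∑ i, (h i j) ^ 2 = 1)

/-- The reduced density matrix `ρ_A = Tr_B |ψ⟩⟨ψ|` of a bipartite vector `ψ`. -/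
noncomputable def rhoA {dA dB : ℕ} (ψ : Fin dA × Fin dB → ℂ) :
    Matrix (Fin dA) (Fin dA) ℂ :=
  Matrix.of fun a a' => ∑ b, ψ (a, b) * star (ψ (a', b))

/-- The reduced density matrix `ρ_B = Tr_A |ψ⟩⟨ψ|` of a bipartite vector `ψ`. -/
noncomputable def rhoB {dA dB : ℕ} (ψ : Fin dA × Fin dB → ℂ) :
    Matrix (Fin dB) (Fin dB) ℂ :=
  Matrix.of fun b b' => ∑ a, ψ (a, b) * star (ψ (a, b'))

/-- `R` is the orthogonal projection onto the support of the (Hermitian, positive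
semidefinite) operator `ρ`: it is a Hermitian idempotent whose kernel coincides with
the kernel of `ρ` (the support being the orthogonal complement of the kernel). -/
def IsSupportProjection {d : ℕ} (ρ R : Matrix (Fin d) (Fin d) ℂ) : Prop :=
  Rᴴ = R ∧ R * R = R ∧ ∀ v : Fin d → ℂ, ρ.mulVec v = 0 ↔ R.mulVec v = 0

/-- The bipartite vector `ψ` viewed as a `dA × dB` matrix. -/
def toMat {dA dB : ℕ} (ψ : Fin dA × Fin dB → ℂ) : Matrix (Fin dA) (Fin dB) ℂ :=
  Matrix.of fun a b => ψ (a, b)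

lemma kron_mulVec_toMat {dA dB : ℕ} (X : Matrix (Fin dA) (Fin dA) ℂ)
    (Y : Matrix (Fin dB) (Fin dB) ℂ) (ψ : Fin dA × Fin dB → ℂ)
    (hv : (X ⊗ₖ Y).mulVec ψ = ψ) : X * toMat ψ * Yᵀ = toMat ψ := by
  ext a b
  have hthis := congrFun hv (a, b)
  simp only [Matrix.mulVec, dotProduct, Fintype.sum_prod_type,
    Matrix.kroneckerMap_apply] at hthis
  simp only [toMat, Matrix.mul_apply, Matrix.of_apply, Matrix.transpose_apply,
    Finset.sum_mul]
  rw [Finset.sum_comm]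
  rw [← hthis]
  congr 1; ext a'; congr 1; ext b'; ring

lemma matrix_eq_zero_of_mulVec {d d' : ℕ} {N : Matrix (Fin d) (Fin d') ℂ}
    (h : ∀ v, N.mulVec v = 0) : N = 0 := by
  ext i j
  have := congrFun (h (Pi.single j 1)) i
  simpa [Matrix.mulVec_single] using this

lemma support_comm {d : ℕ} {ρ R X : Matrix (Fin d) (Fin d) ℂ}
    (hR : IsSupportProjection ρ R) (hXH : Xᴴ = X) (hc : X * ρ = ρ * X) :
    X * R = R * X := by
  obtain ⟨hRH, hRR, hker⟩ := hR
  have key : R * (X * (1 - R)) = 0 := by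
    apply matrix_eq_zero_of_mulVec
    intro v
    have h1 : R.mulVec ((1 - R).mulVec v) = 0 := by
      rw [Matrix.mulVec_mulVec]
      have : R * (1 - R) = 0 := by rw [mul_sub, mul_one, hRR, sub_self]
      rw [this, Matrix.zero_mulVec]
    have h2 : ρ.mulVec ((1 - R).mulVec v) = 0 := (hker _).mpr h1
    have h3 : ρ.mulVec (X.mulVec ((1 - R).mulVec v)) = 0 := by
      rw [Matrix.mulVec_mulVec, ← hc, ← Matrix.mulVec_mulVec, h2, Matrix.mulVec_zero]
    have h4 := (hker _).mp h3
    rw [← Matrix.mulVec_mulVec, ← Matrix.mulVec_mulVec]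
    exact h4
  have key' : (1 - R) * (X * R) = 0 := by
    have := congrArg Matrix.conjTranspose key
    simp only [Matrix.conjTranspose_mul, Matrix.conjTranspose_sub,
      Matrix.conjTranspose_one, hRH, hXH, Matrix.conjTranspose_zero] at this
    calc (1 - R) * (X * R) = (1 - R) * X * R := by rw [mul_assoc]
    _ = 0 := this
  have e1 : R * X = R * X * R := by
    have : R * X - R * X * R = 0 := by
      calc R * X - R * X * R = R * (X * (1 - R)) := by noncomm_ring
      _ = 0 := key
    linear_combination (norm := noncomm_ring) this
  have e2 : X * R = R * X * R := by
    have : X * R - R * (X * R) = 0 := by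
      calc X * R - R * (X * R) = (1 - R) * (X * R) := by noncomm_ring
      _ = 0 := key'
    have h5 : X * R = R * (X * R) := by linear_combination (norm := noncomm_ring) this
    rw [h5, ← mul_assoc]
  rw [e1, e2]

lemma proj_sq {d : ℕ} {R X : Matrix (Fin d) (Fin d) ℂ} (hRR : R * R = R)
    (hX2 : X * X = 1) (hcomm : X * R = R * X) :
    (R * X * R) * (R * X * R) = R := by
  have h1 : R * X * R = X * R := by rw [← hcomm, mul_assoc, hRR]
  rw [h1]
  calc X * R * (X * R) = X * (R * X) * R := by noncomm_ring
  _ = X * (X * R) * R := by rw [hcomm]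
  _ = (X * X) * (R * R) := by noncomm_ring
  _ = R := by rw [hX2, hRR, one_mul]

/-- (Lifting the full-rank assumption, Appendix C.) If a unit vector
`ψ` satisfies the saturation conditions `((Σᵢ hᵢⱼ Aᵢ) ⊗ Bⱼ)ψ = ψ` for an ROCN matrix
`h` and Hermitian involutions `Aᵢ`, `Bⱼ`, and `R_A`, `R_B` are the orthogonal
projections onto the supports of `ρ_A`, `ρ_B`, then every `Aᵢ` commutes with `R_A` and
every `Bⱼ` commutes with `R_B` (block-diagonality), and the restrictions of the
observables to the supports still square to the identity. -/
theorem rocn_lifting_full_rank {m n dA dB : ℕ}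
    (h : Matrix (Fin m) (Fin n) ℝ) (hROCN : IsROCN h)
    (A : Fin m → Matrix (Fin dA) (Fin dA) ℂ)
    (B : Fin n → Matrix (Fin dB) (Fin dB) ℂ)
    (hAH : ∀ i, (A i)ᴴ = A i) (hBH : ∀ j, (B j)ᴴ = B j)
    (hA2 : ∀ i, A i * A i = 1) (hB2 : ∀ j, B j * B j = 1)
    (ψ : Fin dA × Fin dB → ℂ) (hψ : star ψ ⬝ᵥ ψ = 1)
    (hsat : ∀ j, ((∑ i, (h i j : ℂ) • A i) ⊗ₖ B j).mulVec ψ = ψ)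
    (RA : Matrix (Fin dA) (Fin dA) ℂ) (hRA : IsSupportProjection (rhoA ψ) RA)
    (RB : Matrix (Fin dB) (Fin dB) ℂ) (hRB : IsSupportProjection (rhoB ψ) RB) :
    (∀ i, A i * RA = RA * A i) ∧
    (∀ j, B j * RB = RB * B j) ∧
    (∀ i, (RA * A i * RA) * (RA * A i * RA) = RA) ∧
    (∀ j, (RB * B j * RB) * (RB * B j * RB) = RB) := by
  obtain ⟨hmn, hrow, horth, hcol⟩ := hROCN
  set P := toMat ψ with hPdef
  have hrhoA : rhoA ψ = P * Pᴴ := by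
    ext a a'
    simp [rhoA, toMat, Matrix.mul_apply, Matrix.conjTranspose_apply, hPdef]
  have hrhoB : rhoB ψ = (Pᴴ * P)ᵀ := by
    ext b b'
    simp [rhoB, toMat, Matrix.mul_apply, Matrix.conjTranspose_apply, hPdef,
      mul_comm]
  -- per-column commutation facts
  have hkey : ∀ j, ((∑ i, (h i j : ℂ) • A i) * rhoA ψ
        = rhoA ψ * (∑ i, (h i j : ℂ) • A i))
      ∧ (B j * rhoB ψ = rhoB ψ * B j) := by
    intro j
    set M := ∑ i, (h i j : ℂ) • A i with hMdef
    set C := (B j)ᵀ with hCdef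
    have hC2 : C * C = 1 := by
      rw [hCdef, ← Matrix.transpose_mul, hB2, Matrix.transpose_one]
    have hCH : Cᴴ = C := by
      rw [hCdef]
      ext x y
      simp only [Matrix.conjTranspose_apply, Matrix.transpose_apply]
      have := congrFun (congrFun (hBH j) y) x
      simpa [Matrix.conjTranspose_apply] using this
    have hMH : Mᴴ = M := by
      rw [hMdef]
      rw [Matrix.conjTranspose_sum]
      refine Finset.sum_congr rfl fun i _ => ?_
      rw [Matrix.conjTranspose_smul, hAH]
      congr 1
      simp [Complex.star_def, Complex.conj_ofReal]
    have hMPC : M * P * C = P := kron_mulVec_toMat _ _ _ (hsat j)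
    have hM2P : M * (M * P) = P := by
      have h1 : M * (M * P * C) * C = P := by rw [hMPC, hMPC]
      have h2 : M * (M * P * C) * C = M * (M * P) * (C * C) := by simp only [Matrix.mul_assoc]
      rw [h2, hC2, Matrix.mul_one] at h1
      exact h1
    have hPC : P * C = M * P := by
      have h1 : M * (M * P * C) = M * P := by rw [hMPC]
      have h2 : M * (M * P * C) = M * (M * P) * C := by simp only [Matrix.mul_assoc]
      rw [h2, hM2P] at h1
      exact h1
    have hCPH : C * Pᴴ = Pᴴ * M := by
      have h1 := congrArg Matrix.conjTranspose hPC
      simp only [Matrix.conjTranspose_mul, hCH, hMH] at h1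
      exact h1
    have commA : M * (P * Pᴴ) = (P * Pᴴ) * M := by
      calc M * (P * Pᴴ) = (M * P) * Pᴴ := by simp only [Matrix.mul_assoc]
      _ = (P * C) * Pᴴ := by rw [hPC]
      _ = P * (C * Pᴴ) := by simp only [Matrix.mul_assoc]
      _ = P * (Pᴴ * M) := by rw [hCPH]
      _ = (P * Pᴴ) * M := by simp only [Matrix.mul_assoc]
    have commB : C * (Pᴴ * P) = (Pᴴ * P) * C := by
      calc C * (Pᴴ * P) = (C * Pᴴ) * P := by simp only [Matrix.mul_assoc]
      _ = (Pᴴ * M) * P := by rw [hCPH]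
      _ = Pᴴ * (M * P) := by simp only [Matrix.mul_assoc]
      _ = Pᴴ * (P * C) := by rw [hPC]
      _ = (Pᴴ * P) * C := by simp only [Matrix.mul_assoc]
    constructor
    · rw [hrhoA]; exact commA
    · rw [hrhoB]
      have hB_eq : B j = Cᵀ := by rw [hCdef, Matrix.transpose_transpose]
      rw [hB_eq, ← Matrix.transpose_mul, ← Matrix.transpose_mul, commB]
  -- each A_i commutes with rhoA
  have hAcomm : ∀ k, A k * rhoA ψ = rhoA ψ * A k := by
    intro k
    set c : ℝ := ∑ j, (h k j) ^ 2 with hcdef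
    have hc0 : c ≠ 0 := by
      obtain ⟨j0, hj0⟩ := hrow k
      have hpos : 0 < c := by
        refine Finset.sum_pos' (fun j _ => sq_nonneg _) ⟨j0, Finset.mem_univ _, ?_⟩
        positivity
      exact ne_of_gt hpos
    have hsum : ∑ j, (h k j : ℂ) • (∑ i, (h i j : ℂ) • A i) = (c : ℂ) • A k := by
      have e1 : ∀ j, (h k j : ℂ) • (∑ i, (h i j : ℂ) • A i)
          = ∑ i, ((h k j * h i j : ℝ) : ℂ) • A i := by
        intro j
        rw [Finset.smul_sum]
        refine Finset.sum_congr rfl fun i _ => ?_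
        rw [smul_smul]
        norm_cast
      simp_rw [e1]
      rw [Finset.sum_comm]
      have e2 : ∀ i, ∑ j, ((h k j * h i j : ℝ) : ℂ) • A i
          = ((∑ j, h k j * h i j : ℝ) : ℂ) • A i := by
        intro i
        rw [← Finset.sum_smul]
        norm_cast
      simp_rw [e2]
      rw [Finset.sum_eq_single k]
      · have : (∑ j, h k j * h k j) = c := by
          rw [hcdef]
          exact Finset.sum_congr rfl fun j _ => (pow_two (h k j)).symm ▸ rfl
        rw [this]
      · intro i _ hik
        rw [horth k i (Ne.symm hik)]
        norm_num
      · intro habs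
        exact absurd (Finset.mem_univ k) habs
    have hAc : ((c : ℂ) • A k) * rhoA ψ = rhoA ψ * ((c : ℂ) • A k) := by
      rw [← hsum, Finset.sum_mul, Finset.mul_sum]
      refine Finset.sum_congr rfl fun j _ => ?_
      rw [Matrix.smul_mul, Matrix.mul_smul, (hkey j).1]
    rw [Matrix.smul_mul, Matrix.mul_smul] at hAc
    have hcC : (c : ℂ) ≠ 0 := by exact_mod_cast hc0
    exact smul_right_injective _ hcC hAc
  refine ⟨fun i => support_comm hRA (hAH i) (hAcomm i),
    fun j => support_comm hRB (hBH j) ((hkey j).2),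
    fun i => proj_sq hRA.2.1 (hA2 i) ?_,
    fun j => proj_sq hRB.2.1 (hB2 j) ?_⟩
  · exact support_comm hRA (hAH i) (hAcomm i)
  · exact support_comm hRB (hBH j) ((hkey j).2)
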